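/- (Strict decrease away from the eigenspace) Let 0 ≤ η < 1 and let u ∈ H with ‖u‖₀ = 1 and λ₁ < λ(u) < λ₂. Let w solve a(w,χ) = a(u,χ) − λ(u)(u,χ) for all χ ∈ H, let ‖v − w‖ ≤ η‖w‖, and u' = (u − v)/‖u − v‖₀. Then λ(u') < λ(u) strictly. -/
import Mathlib
set_option maxHeartbeats 1000000


open scoped RealInnerProductSpace

/-- The Rayleigh quotient `λ(u) = a(u,u)/(u,u)`, where `a = ⟪·,·⟫` is the inner product of the
Hilbert space `H` (inducing the energy norm `‖·‖`) and `b` is the second inner product `(·,·)`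
(inducing the weaker norm `‖·‖₀ = √(b u u)`). Note `⟪u,u⟫ = ‖u‖²`. -/
noncomputable def rayleigh {H : Type*} [NormedAddCommGroup H] [InnerProductSpace ℝ H]
    (b : LinearMap.BilinForm ℝ H) (u : H) : ℝ :=
  ‖u‖ ^ 2 / b u u

/-- strict decrease of the Rayleigh quotient away from the eigenspace. -/
theorem rayleigh_strict_decrease {H : Type*} [NormedAddCommGroup H] [InnerProductSpace ℝ H] [CompleteSpace H]
    (b : LinearMap.BilinForm ℝ H)
    (hb_symm : ∀ x y : H, b x y = b y x)
    (hb_pos : ∀ x : H, x ≠ 0 → 0 < b x x)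
    (lam1 : ℝ) (hlam1 : 0 < lam1)
    (hmin : ∀ x : H, x ≠ 0 → lam1 ≤ rayleigh b x)
    (hE1 : ∃ x : H, x ≠ 0 ∧ ∀ χ : H, ⟪ x, χ⟫ = lam1 * b x χ)
    (lam2 : ℝ) (hlam12 : lam1 < lam2)
    (hmin2 : ∀ x : H, x ≠ 0 →
      (∀ χ₁ : H, (∀ χ : H, ⟪χ₁, χ⟫ = lam1 * b χ₁ χ) → b x χ₁ = 0) →
      lam2 ≤ rayleigh b x)
    (eta : ℝ) (heta0 : 0 ≤ eta) (heta1 : eta < 1)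
    (u w v : H) (hu : b u u = 1) (hgt : lam1 < rayleigh b u) (hlt : rayleigh b u < lam2)
    (hw : ∀ χ : H, ⟪w, χ⟫ = ⟪u, χ⟫ - rayleigh b u * b u χ)
    (hv : ‖v - w‖ ≤ eta * ‖w‖) :
    rayleigh b ((Real.sqrt (b (u - v) (u - v)))⁻¹ • (u - v)) < rayleigh b u := by
  set lam := rayleigh b u with hlamdef
  have hune : u ≠ 0 := by
    intro h; rw [h] at hu; simp at hu
  have hlam : lam = ‖u‖ ^ 2 := by
    simp [hlamdef, rayleigh, hu]
  have hlampos : 0 < lam := lt_trans hlam1 hgt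
  -- w ≠ 0
  have hwne : w ≠ 0 := by
    intro hw0
    have heig : ∀ χ : H, ⟪u, χ⟫ = lam * b u χ := by
      intro χ
      have h := hw χ
      rw [hw0, inner_zero_left] at h
      linarith
    have hb0 : ∀ χ₁ : H, (∀ χ : H, ⟪χ₁, χ⟫ = lam1 * b χ₁ χ) → b u χ₁ = 0 := by
      intro χ₁ hχ₁
      have h1 : ⟪u, χ₁⟫ = lam * b u χ₁ := heig χ₁
      have h2 : ⟪χ₁, u⟫ = lam1 * b χ₁ u := hχ₁ u
      rw [real_inner_comm, hb_symm χ₁ u] at h2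
      have h3 : (lam - lam1) * b u χ₁ = 0 := by linarith
      rcases mul_eq_zero.mp h3 with h4 | h4
      · exfalso; have : lam1 < lam := hgt; linarith
      · exact h4
    have := hmin2 u hune hb0
    linarith
  have hwpos : 0 < ‖w‖ ^ 2 := pow_pos (norm_pos_iff.mpr hwne) 2
  -- key identity
  have hwv : ⟪w, v⟫ = ⟪u, v⟫ - lam * b u v := hw v
  have huu : ⟪u, u⟫ = lam := by rw [real_inner_self_eq_norm_sq, hlam]
  have hsym : b u v = b v u := hb_symm u v
  have hexp1 : ‖u - v‖ ^ 2 = lam - 2 * ⟪u, v⟫ + ‖v‖ ^ 2 := by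
    rw [norm_sub_sq_real, ← hlam]
  have hexp2 : ‖v - w‖ ^ 2 = ‖v‖ ^ 2 - 2 * ⟪w, v⟫ + ‖w‖ ^ 2 := by
    rw [norm_sub_sq_real, real_inner_comm]
  have hexp3 : b (u - v) (u - v) = 1 - 2 * b u v + b v v := by
    simp only [map_sub, LinearMap.sub_apply]
    rw [hu, hsym]; ring
  have hD : lam * b (u - v) (u - v) - ‖u - v‖ ^ 2
      = ‖w‖ ^ 2 - ‖v - w‖ ^ 2 + lam * b v v := by
    rw [hexp1, hexp2, hexp3]; nlinarith [hwv]
  have hr2 : ‖v - w‖ ^ 2 ≤ eta ^ 2 * ‖w‖ ^ 2 := by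
    nlinarith [norm_nonneg (v - w), norm_nonneg w, hv]
  have hbvv : 0 ≤ b v v := by
    rcases eq_or_ne v 0 with h | h
    · simp [h]
    · exact (hb_pos v h).le
  have hDpos : 0 < lam * b (u - v) (u - v) - ‖u - v‖ ^ 2 := by
    nlinarith [mul_pos (by nlinarith : (0:ℝ) < 1 - eta ^ 2) hwpos,
      mul_nonneg hlampos.le hbvv]
  have hbe : 0 < b (u - v) (u - v) := by
    by_contra h
    push_neg at h
    nlinarith [sq_nonneg ‖u - v‖, mul_nonneg hlampos.le (neg_nonneg.mpr h)]
  have hene : u - v ≠ 0 := by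
    intro h; rw [h] at hbe; simp at hbe
  have hc : 0 < Real.sqrt (b (u - v) (u - v)) := Real.sqrt_pos.mpr hbe
  have hc2 : (Real.sqrt (b (u - v) (u - v)))⁻¹ ^ 2 * b (u - v) (u - v) = 1 := by
    rw [inv_pow, Real.sq_sqrt hbe.le]
    exact inv_mul_cancel₀ hbe.ne'
  have hray : rayleigh b ((Real.sqrt (b (u - v) (u - v)))⁻¹ • (u - v))
      = ‖u - v‖ ^ 2 / b (u - v) (u - v) := by
    unfold rayleigh
    rw [norm_smul, Real.norm_eq_abs, abs_of_pos (inv_pos.mpr hc)]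
    simp only [map_smul, LinearMap.smul_apply, smul_eq_mul]
    rw [mul_pow,
      show (Real.sqrt (b (u - v) (u - v)))⁻¹ * ((Real.sqrt (b (u - v) (u - v)))⁻¹ * b (u - v) (u - v))
        = (Real.sqrt (b (u - v) (u - v)))⁻¹ ^ 2 * b (u - v) (u - v) from by ring,
      mul_div_mul_left _ _ (pow_ne_zero 2 (inv_ne_zero hc.ne'))]
  rw [hray]
  rw [div_lt_iff₀ hbe]
  nlinarith [hDpos]
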